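/- Sequential conjunction of dialectica spaces is functorial: given morphisms (f,F) : A → C and (g,G) : B → D of dialectica spaces over 𝟜, the pair (f × g, F × G) is a morphism A ▷ B → C ▷ D. -/

import Mathlib

/-- The four-element set 𝟜 = {0, 1/4, 1/2, 1} as a subset of ℚ, with its usual order. -/
def Four : Set ℚ := {0, 1/4, 1/2, 1}

/-- Elements of 𝟜. -/
def F4 : Type := {q : ℚ // q ∈ Four}

instance : LE F4 := ⟨fun a b => a.1 ≤ b.1⟩

/-- A dialectica space over 𝟜 is a triple (U, X, α) with α : U → X → 𝟜. -/
structure DSpace where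
  U : Type
  X : Type
  rel : U → X → F4

/-- The morphism condition for dialectica spaces:
(f, F) : A → B requires α(u, F y) ≤ β(f u, y) for all u, y. -/
def IsMorphism (A B : DSpace) (f : A.U → B.U) (F : B.X → A.X) : Prop :=
  ∀ (u : A.U) (y : B.X), A.rel u (F y) ≤ B.rel (f u) y

/-- Sequential conjunction ▷₄ on ℚ. -/
def seqc (A B : ℚ) : ℚ :=
  if (A = 1/2 ∨ A = 1) ∧ B ≠ 0 then 1
  else if A = 1/4 ∧ B ≠ 0 then 1/4
  else 0

lemma seqc_mem (A B : ℚ) : seqc A B ∈ Four := by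
  unfold seqc Four
  split_ifs <;> simp

/-- Sequential conjunction on 𝟜. -/
def seqF (a b : F4) : F4 := ⟨seqc a.1 b.1, seqc_mem _ _⟩

/-- Sequential conjunction of dialectica spaces. -/
def dseq (A B : DSpace) : DSpace :=
  ⟨A.U × B.U, A.X × B.X, fun p q => seqF (A.rel p.1 q.1) (B.rel p.2 q.2)⟩

lemma seqc_mono {a b a' b' : ℚ} (ha : a ∈ Four) (hb : b ∈ Four)
    (ha' : a' ∈ Four) (hb' : b' ∈ Four) (h1 : a ≤ a') (h2 : b ≤ b') :
    seqc a b ≤ seqc a' b' := by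
  simp only [Four, Set.mem_insert_iff, Set.mem_singleton_iff] at ha hb ha' hb'
  rcases ha with h|h|h|h <;> subst h <;>
  rcases hb with h|h|h|h <;> subst h <;>
  rcases ha' with h|h|h|h <;> subst h <;>
  rcases hb' with h|h|h|h <;> subst h <;>
  simp only [seqc] <;> revert h1 h2 <;> norm_num

theorem dseq_functorial (A B C D : DSpace)
    (f : A.U → C.U) (F : C.X → A.X) (g : B.U → D.U) (G : D.X → B.X)
    (hf : IsMorphism A C f F) (hg : IsMorphism B D g G) :
    IsMorphism (dseq A B) (dseq C D) (Prod.map f g) (Prod.map F G) := by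
  rintro ⟨u, v⟩ ⟨y, z⟩
  exact seqc_mono (A.rel u (F y)).2 (B.rel v (G z)).2 (C.rel (f u) y).2
    (D.rel (g v) z).2 (hf u y) (hg v z)
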